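/- Let K be a number field and A a flat O_K-algebra. Then for every Witt vector ξ ∈ W_{O_K}(A) and all nonzero prime ideals p, q ∈ P_K: (i) ψ_p ξ ∈ W_{O_K}(A), i.e. W_{O_K}(A) is closed under the shift operators; (ii) ψ_p ψ_q ξ = ψ_q ψ_p ξ; and (iii) ψ_p ξ − ξ^{#k_p} ∈ p·W_{O_K}(A). -/

import Mathlib

open NumberField

noncomputable section

/-- The multiplicative monoid `I_K` of nonzero ideals of the ring of integers of `K`. -/
def IdealMonoid (K : Type) [Field K] [NumberField K] : Submonoid (Ideal (𝓞 K)) where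
  carrier := {I | I ≠ ⊥}
  mul_mem' := by
    intro a b ha hb h
    rcases Ideal.mul_eq_bot.mp h with h' | h'
    · exact ha h'
    · exact hb h'
  one_mem' := by
    simp only [Set.mem_setOf_eq, Ideal.one_eq_top]
    exact top_ne_bot

/-- `I_K`, the monoid of nonzero ideals, as a type. -/
abbrev IK (K : Type) [Field K] [NumberField K] := ↥(IdealMonoid K)

/-- `P_K`, the set of nonzero prime ideals of `𝓞 K`, as a type. -/
def PrimeIdeal (K : Type) [Field K] [NumberField K] :=
  {p : Ideal (𝓞 K) // p.IsPrime ∧ p ≠ ⊥}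

/-- A nonzero prime ideal, regarded as an element of `I_K`. -/
def PrimeIdeal.toIK {K : Type} [Field K] [NumberField K] (p : PrimeIdeal K) : IK K :=
  ⟨p.1, p.2.2⟩

/-- `#k_p`: the cardinality of the residue ring `R ⧸ p`. -/
def residueCard {R : Type} [CommRing R] (p : Ideal R) : ℕ :=
  Nat.card (R ⧸ p)

/-- The shift operator `ψ_a` on `A^{I_K}`: `(ψ_a ξ)_b = ξ_{a·b}`. -/
def shift {K : Type} [Field K] [NumberField K] {A : Type} (a : IK K)
    (ξ : IK K → A) : IK K → A :=
  fun b => ξ (a * b)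

/-- For an ideal `p` of `𝓞 K` and a subset `S ⊆ A^{I_K}`, the set `p·S` of all finite
sums of products of elements of `p` with elements of (the module generated by) `S`. -/
def idealMulSet {K : Type} [Field K] [NumberField K] {A : Type} [CommRing A]
    [Algebra (𝓞 K) A] (p : Ideal (𝓞 K)) (S : Set (IK K → A)) : Set (IK K → A) :=
  ↑(p • Submodule.span (𝓞 K) S)

/-- The descending chain `U_n(A)` of subsets of `A^{I_K}`. -/
def UnSet (K : Type) [Field K] [NumberField K] (A : Type) [CommRing A]
    [Algebra (𝓞 K) A] : ℕ → Set (IK K → A)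
  | 0 => Set.univ
  | n + 1 => {ξ | ξ ∈ UnSet K A n ∧ ∀ p : PrimeIdeal K,
      shift p.toIK ξ - ξ ^ residueCard p.1 ∈ idealMulSet p.1 (UnSet K A n)}

/-- The ring of Witt vectors `W_{O_K}(A) = ⋂ₙ U_n(A)`, as a subset of `A^{I_K}`. -/
def WittSet (K : Type) [Field K] [NumberField K] (A : Type) [CommRing A]
    [Algebra (𝓞 K) A] : Set (IK K → A) :=
  ⋂ n, UnSet K A n

/-- A deterministic finite automaton with output, over input alphabet `Δ` and
output alphabet `O`. -/
structure DFAO (Δ O : Type) : Type 1 where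
  State : Type
  [finState : Finite State]
  trans : State → Δ → State
  start : State
  out : State → O

/-- The output of a DFAO on an input word, processing letters from left to right. -/
def DFAO.output {Δ O : Type} (M : DFAO Δ O) (l : List Δ) : O :=
  M.out (l.foldl M.trans M.start)

/-- `ξ ∈ A^{I_K}` is automatic if some DFAO with input alphabet `P_K` and output
alphabet `A` produces `ξ_a` from every word of primes whose product is `a`. -/
def IsAutomatic {K : Type} [Field K] [NumberField K] {A : Type}
    (ξ : IK K → A) : Prop :=
  ∃ M : DFAO (PrimeIdeal K) A, ∀ (l : List (PrimeIdeal K)) (a : IK K),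
    (a : Ideal (𝓞 K)) = (l.map Subtype.val).prod → ξ a = M.output l

/-- `v_p(a)`: the largest `e` such that `p^e` divides `a`. -/
def vIdeal {R : Type} [CommRing R] (p a : Ideal R) : ℕ :=
  sSup {e : ℕ | p ^ e ∣ a}

open Pointwise in
/-- Auxiliary: if `span {d} = p * J` and `d`-scaling is injective on `M`, then an element
lying in `p • T n` for every `n` lies in `p • ⨅ n, T n`. -/
theorem aux_smul_iInf_mem {R M : Type*} [CommRing R] [AddCommGroup M] [Module R M]
    (p J : Ideal R) (d : R) (hdp : Ideal.span {d} = p * J)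
    (hreg : Function.Injective fun m : M => d • m)
    (T : ℕ → Submodule R M) (x : M) (hx : ∀ n, x ∈ p • T n) :
    x ∈ p • ⨅ n, T n := by
  have key : ∀ c ∈ J, ∃ y ∈ ⨅ n, T n, d • y = c • x := by
    intro c hc
    have h1 : ∀ n, c • x ∈ d • T n := by
      intro n
      have h2 : c • x ∈ J • (p • T n) := Submodule.smul_mem_smul hc (hx n)
      rwa [← mul_smul, mul_comm, ← hdp, Submodule.ideal_span_singleton_smul] at h2
    have h3 : ∀ n, ∃ y ∈ T n, d • y = c • x := by
      intro n
      obtain ⟨y, hy, hdy⟩ := Submodule.mem_map.mp (h1 n)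
      exact ⟨y, hy, hdy⟩
    choose y hy hdy using h3
    have h4 : ∀ n, y n = y 0 := fun n => hreg (by simp only [hdy])
    refine ⟨y 0, Submodule.mem_iInf _ |>.mpr fun n => ?_, hdy 0⟩
    rw [← h4 n]; exact hy n
  have hd' : d ∈ p * J := by rw [← hdp]; exact Ideal.mem_span_singleton_self d
  have h5 : d • x ∈ d • (p • ⨅ n, T n) := by
    refine Submodule.mul_induction_on (C := fun z => z • x ∈ d • (p • ⨅ n, T n)) hd' ?_ ?_
    · intro a ha c hc
      obtain ⟨y, hy, hdy⟩ := key c hc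
      have : (a * c) • x = d • (a • y) := by
        rw [mul_smul, ← hdy, smul_smul, smul_smul, mul_comm]
      rw [this]
      exact Submodule.smul_mem_pointwise_smul _ _ _ (Submodule.smul_mem_smul ha hy)
    · intro z w hz hw
      rw [add_smul]
      exact Submodule.add_mem _ hz hw
  obtain ⟨y, hy, hdy⟩ := Submodule.mem_map.mp h5
  have : y = x := hreg hdy
  rwa [← this]

/-- Scaling by a nonzero element of `𝓞 K` is injective on a flat `𝓞 K`-algebra. -/
theorem aux_flat_regular (K : Type) [Field K] [NumberField K]
    (A : Type) [CommRing A] [Algebra (𝓞 K) A] [Module.Flat (𝓞 K) A]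
    {d : 𝓞 K} (hd : d ≠ 0) : Function.Injective fun a : A => d • a := by
  let f : 𝓞 K →ₗ[𝓞 K] 𝓞 K := LinearMap.toSpanSingleton (𝓞 K) (𝓞 K) d
  have hf : Function.Injective f := by
    intro a b hab
    simp only [f, LinearMap.toSpanSingleton_apply, smul_eq_mul] at hab
    exact mul_right_cancel₀ hd hab
  have hinj : Function.Injective (f.lTensor A) :=
    Module.Flat.lTensor_preserves_injective_linearMap f hf
  let e := TensorProduct.rid (𝓞 K) A
  have hkey : ∀ a : A, e (f.lTensor A (e.symm a)) = d • a := by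
    intro a
    rw [TensorProduct.rid_symm_apply]
    simp [f, e, TensorProduct.rid_tmul]
  intro a b hab
  have hab' : d • a = d • b := hab
  have : e (f.lTensor A (e.symm a)) = e (f.lTensor A (e.symm b)) := by
    rw [hkey, hkey, hab']
  exact e.symm.injective (hinj (e.injective this))

set_option maxHeartbeats 1000000 in
set_option synthInstance.maxHeartbeats 400000 in
/-- Auxiliary facts about the residue field of a nonzero prime of `𝓞 K`. -/
theorem aux_residue_facts (K : Type) [Field K] [NumberField K] (p : PrimeIdeal K) :
    ∃ ℓ f : ℕ, Nat.Prime ℓ ∧ residueCard p.1 = ℓ ^ f ∧ ((ℓ : 𝓞 K) ∈ p.1) ∧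
      (∀ c : 𝓞 K, c ^ residueCard p.1 - c ∈ p.1) ∧ residueCard p.1 ≠ 0 := by
  haveI : p.1.IsMaximal := Ideal.IsPrime.isMaximal p.2.1 p.2.2
  letI : Field (𝓞 K ⧸ p.1) := Ideal.Quotient.field p.1
  letI : Fintype (𝓞 K ⧸ p.1) :=
    @Fintype.ofFinite _ (Ideal.finiteQuotientOfFreeOfNeBot p.1 p.2.2)
  obtain ⟨n, hℓ, hcard⟩ :=
    FiniteField.card (𝓞 K ⧸ p.1) (ringChar (𝓞 K ⧸ p.1))
  have hrescard : residueCard p.1 = Fintype.card (𝓞 K ⧸ p.1) := Nat.card_eq_fintype_card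
  refine ⟨ringChar (𝓞 K ⧸ p.1), n, hℓ, by rw [hrescard, hcard], ?_, ?_, ?_⟩
  · have h0 : (Ideal.Quotient.mk p.1) ((ringChar (𝓞 K ⧸ p.1) : ℕ) : 𝓞 K) = 0 := by
      rw [map_natCast (Ideal.Quotient.mk p.1)]
      exact CharP.cast_eq_zero (𝓞 K ⧸ p.1) _
    exact Ideal.Quotient.eq_zero_iff_mem.mp h0
  · intro c
    have h0 : (Ideal.Quotient.mk p.1) (c ^ residueCard p.1 - c) = 0 := by
      rw [map_sub, map_pow, hrescard, FiniteField.pow_card, sub_self]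
    exact Ideal.Quotient.eq_zero_iff_mem.mp h0
  · rw [hrescard, hcard]
    exact pow_ne_zero _ hℓ.pos.ne'

/-- Each `U_n(A)` is the underlying set of an `𝓞 K`-subalgebra of `A^{I_K}`. -/
theorem aux_un_subalgebra (K : Type) [Field K] [NumberField K]
    (A : Type) [CommRing A] [Algebra (𝓞 K) A] :
    ∀ n : ℕ, ∃ S : Subalgebra (𝓞 K) (IK K → A), (S : Set (IK K → A)) = UnSet K A n := by
  intro n
  induction n with
  | zero => exact ⟨⊤, by simp [UnSet]⟩
  | succ n ih =>
    obtain ⟨S, hS⟩ := ih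
    have hspan : Submodule.span (𝓞 K) (UnSet K A n) = Subalgebra.toSubmodule S := by
      rw [← hS, ← Subalgebra.coe_toSubmodule, Submodule.span_eq]
    have hset : ∀ r : PrimeIdeal K,
        idealMulSet r.1 (UnSet K A n) = ↑(r.1 • Subalgebra.toSubmodule S) := by
      intro r; unfold idealMulSet; rw [hspan]
    have hmemS : ∀ {x : IK K → A}, x ∈ UnSet K A n ↔ x ∈ S := by
      intro x; rw [← hS]; rfl
    -- multiplication of `p • S` by elements of `S` stays in `p • S`
    have hmulNS : ∀ (r : PrimeIdeal K) (x m : IK K → A),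
        x ∈ r.1 • Subalgebra.toSubmodule S → m ∈ S →
        x * m ∈ r.1 • Subalgebra.toSubmodule S := by
      intro r x m hx hm
      refine Submodule.smul_induction_on hx (fun c hc z hz => ?_) (fun z w hz hw => ?_)
      · rw [smul_mul_assoc]
        exact Submodule.smul_mem_smul hc (Subalgebra.mul_mem S hz hm)
      · rw [add_mul]; exact Submodule.add_mem _ hz hw
    -- shifts of elements of `U_{n+1}` lie in `U_n`
    have hshift : ∀ (η : IK K → A), η ∈ UnSet K A (n + 1) → ∀ r : PrimeIdeal K,
        shift r.toIK η ∈ UnSet K A n := by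
      intro η hη r
      have h1 : shift r.toIK η - η ^ residueCard r.1 ∈ r.1 • Subalgebra.toSubmodule S := by
        have := hη.2 r; rwa [hset r] at this
      have h2 : shift r.toIK η - η ^ residueCard r.1 ∈ Subalgebra.toSubmodule S :=
        Submodule.smul_le_right h1
      have h3 : η ^ residueCard r.1 ∈ S := Subalgebra.pow_mem S (hmemS.mp hη.1) _
      have : shift r.toIK η = (shift r.toIK η - η ^ residueCard r.1) + η ^ residueCard r.1 := by
        ring
      rw [this]
      exact hmemS.mpr (Subalgebra.add_mem S h2 h3)
    refine ⟨{
      carrier := UnSet K A (n + 1)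
      zero_mem' := ?_
      one_mem' := ?_
      add_mem' := ?_
      mul_mem' := ?_
      algebraMap_mem' := ?_ }, rfl⟩
    · -- multiplication
      intros
      rename_i ξ η hξ hη
      refine ⟨hmemS.mpr (Subalgebra.mul_mem S (hmemS.mp hξ.1) (hmemS.mp hη.1)), fun r => ?_⟩
      rw [hset r]
      have hξ2 : shift r.toIK ξ - ξ ^ residueCard r.1 ∈ r.1 • Subalgebra.toSubmodule S := by
        have := hξ.2 r; rwa [hset r] at this
      have hη2 : shift r.toIK η - η ^ residueCard r.1 ∈ r.1 • Subalgebra.toSubmodule S := by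
        have := hη.2 r; rwa [hset r] at this
      have hshmul : shift r.toIK (ξ * η) = shift r.toIK ξ * shift r.toIK η := rfl
      have hdecomp : shift r.toIK (ξ * η) - (ξ * η) ^ residueCard r.1 =
          (shift r.toIK ξ - ξ ^ residueCard r.1) * shift r.toIK η
            + (shift r.toIK η - η ^ residueCard r.1) * ξ ^ residueCard r.1 := by
        rw [hshmul, mul_pow]; ring
      rw [hdecomp]
      have hshη : shift r.toIK η ∈ S := hmemS.mp (hshift η hη r)
      have hξq : ξ ^ residueCard r.1 ∈ S := Subalgebra.pow_mem S (hmemS.mp hξ.1) _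
      exact Submodule.add_mem _ (hmulNS r _ _ hξ2 hshη) (hmulNS r _ _ hη2 hξq)
    · -- one
      refine ⟨hmemS.mpr (Subalgebra.one_mem S), fun r => ?_⟩
      rw [hset r]
      have : shift r.toIK (1 : IK K → A) - (1 : IK K → A) ^ residueCard r.1 = 0 := by
        have h0 : shift r.toIK (1 : IK K → A) = 1 := rfl
        rw [h0, one_pow, sub_self]
      rw [this]
      exact Submodule.zero_mem _
    · -- addition
      intros
      rename_i ξ η hξ hη
      refine ⟨hmemS.mpr (Subalgebra.add_mem S (hmemS.mp hξ.1) (hmemS.mp hη.1)), fun r => ?_⟩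
      obtain ⟨ℓ, f, hℓ, hcard, hℓp, hferm, hq0⟩ := aux_residue_facts K r
      rw [hset r]
      have hξ2 : shift r.toIK ξ - ξ ^ residueCard r.1 ∈ r.1 • Subalgebra.toSubmodule S := by
        have := hξ.2 r; rwa [hset r] at this
      have hη2 : shift r.toIK η - η ^ residueCard r.1 ∈ r.1 • Subalgebra.toSubmodule S := by
        have := hη.2 r; rwa [hset r] at this
      have hsummem : (∑ k ∈ Finset.Ioo 0 (ℓ ^ f),
          ξ ^ k * η ^ (ℓ ^ f - k) * (((ℓ ^ f).choose k / ℓ : ℕ) : IK K → A)) ∈ S := by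
        refine Subalgebra.sum_mem S fun k _ => ?_
        exact Subalgebra.mul_mem S
          (Subalgebra.mul_mem S (Subalgebra.pow_mem S (hmemS.mp hξ.1) _)
            (Subalgebra.pow_mem S (hmemS.mp hη.1) _))
          (Subalgebra.natCast_mem S _)
      have hpow : (ξ + η) ^ residueCard r.1 =
          ξ ^ residueCard r.1 + η ^ residueCard r.1 + (ℓ : IK K → A) *
            ∑ k ∈ Finset.Ioo 0 (ℓ ^ f),
              ξ ^ k * η ^ (ℓ ^ f - k) * (((ℓ ^ f).choose k / ℓ : ℕ) : IK K → A) := by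
        rw [hcard]
        exact add_pow_prime_pow_eq' hℓ ξ η f
      have hshadd : shift r.toIK (ξ + η) = shift r.toIK ξ + shift r.toIK η := rfl
      have hdecomp : shift r.toIK (ξ + η) - (ξ + η) ^ residueCard r.1 =
          (shift r.toIK ξ - ξ ^ residueCard r.1) + (shift r.toIK η - η ^ residueCard r.1)
            - (ℓ : IK K → A) *
              ∑ k ∈ Finset.Ioo 0 (ℓ ^ f),
                ξ ^ k * η ^ (ℓ ^ f - k) * (((ℓ ^ f).choose k / ℓ : ℕ) : IK K → A) := by
        rw [hshadd, hpow]; ring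
      rw [hdecomp]
      have hlsum : (ℓ : IK K → A) *
          (∑ k ∈ Finset.Ioo 0 (ℓ ^ f),
            ξ ^ k * η ^ (ℓ ^ f - k) * (((ℓ ^ f).choose k / ℓ : ℕ) : IK K → A))
          ∈ r.1 • Subalgebra.toSubmodule S := by
        have hsm : (ℓ : IK K → A) *
            (∑ k ∈ Finset.Ioo 0 (ℓ ^ f),
              ξ ^ k * η ^ (ℓ ^ f - k) * (((ℓ ^ f).choose k / ℓ : ℕ) : IK K → A))
            = ((ℓ : ℕ) : 𝓞 K) • (∑ k ∈ Finset.Ioo 0 (ℓ ^ f),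
              ξ ^ k * η ^ (ℓ ^ f - k) * (((ℓ ^ f).choose k / ℓ : ℕ) : IK K → A)) := by
          rw [Algebra.smul_def, map_natCast]
        rw [hsm]
        exact Submodule.smul_mem_smul hℓp hsummem
      exact Submodule.sub_mem _ (Submodule.add_mem _ hξ2 hη2) hlsum
    · -- zero
      refine ⟨hmemS.mpr (Subalgebra.zero_mem S), fun r => ?_⟩
      obtain ⟨ℓ, f, hℓ, hcard, hℓp, hferm, hq0⟩ := aux_residue_facts K r
      rw [hset r]
      have : shift r.toIK (0 : IK K → A) - (0 : IK K → A) ^ residueCard r.1 = 0 := by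
        have h0 : shift r.toIK (0 : IK K → A) = 0 := rfl
        rw [h0, zero_pow hq0, sub_zero]
      rw [this]
      exact Submodule.zero_mem _
    · -- algebraMap
      intro c
      obtain hmem := hmemS.mpr (Subalgebra.algebraMap_mem S c)
      refine ⟨hmem, fun r => ?_⟩
      obtain ⟨ℓ, f, hℓ, hcard, hℓp, hferm, hq0⟩ := aux_residue_facts K r
      rw [hset r]
      have hsh : shift r.toIK (algebraMap (𝓞 K) (IK K → A) c) =
          algebraMap (𝓞 K) (IK K → A) c := rfl
      have hdecomp : shift r.toIK (algebraMap (𝓞 K) (IK K → A) c)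
          - (algebraMap (𝓞 K) (IK K → A) c) ^ residueCard r.1
          = (c - c ^ residueCard r.1) • (1 : IK K → A) := by
        rw [hsh, ← map_pow, ← map_sub, Algebra.algebraMap_eq_smul_one]
      rw [hdecomp]
      have hc : c - c ^ residueCard r.1 ∈ r.1 := by
        have := hferm c
        have h' := neg_mem this
        rwa [neg_sub] at h'
      exact Submodule.smul_mem_smul hc (Subalgebra.one_mem S)

/-- for a number field `K` and a flat `𝓞 K`-algebra `A`, the ring of Witt
vectors `W_{O_K}(A)` is closed under the shift operators `ψ_p`, the shifts commute, and
`ψ_p ξ - ξ^{#k_p} ∈ p·W_{O_K}(A)`. -/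
theorem witt_shift_closed_comm_frobenius (K : Type) [Field K] [NumberField K]
    (A : Type) [CommRing A] [Algebra (𝓞 K) A] [Module.Flat (𝓞 K) A]
    (ξ : IK K → A) (hξ : ξ ∈ WittSet K A) (p q : PrimeIdeal K) :
    shift p.toIK ξ ∈ WittSet K A ∧
    shift p.toIK (shift q.toIK ξ) = shift q.toIK (shift p.toIK ξ) ∧
    shift p.toIK ξ - ξ ^ residueCard p.1 ∈ idealMulSet p.1 (WittSet K A) := by
  choose S hS using aux_un_subalgebra K A
  set T : ℕ → Submodule (𝓞 K) (IK K → A) := fun n => Subalgebra.toSubmodule (S n) with hT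
  have hξn : ∀ n, ξ ∈ UnSet K A n := fun n => Set.mem_iInter.mp hξ n
  have hWitt : WittSet K A = ↑(⨅ n, T n) := by
    rw [Submodule.coe_iInf]
    unfold WittSet
    refine Set.iInter_congr fun n => ?_
    rw [← hS n]; rfl
  -- (i) closure under shift
  have hshift_closed : ∀ (r : PrimeIdeal K) (η : IK K → A),
      (∀ n, η ∈ UnSet K A n) → shift r.toIK η ∈ WittSet K A := by
    intro r η hη
    refine Set.mem_iInter.mpr fun n => ?_
    have hη1 : η ∈ UnSet K A (n + 1) := hη (n + 1)
    have hspan : Submodule.span (𝓞 K) (UnSet K A n) = T n := by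
      rw [hT, ← hS n, ← Subalgebra.coe_toSubmodule, Submodule.span_eq]
    have h1 : shift r.toIK η - η ^ residueCard r.1 ∈ r.1 • T n := by
      have := hη1.2 r
      unfold idealMulSet at this
      rwa [hspan] at this
    have h2 : shift r.toIK η - η ^ residueCard r.1 ∈ T n := Submodule.smul_le_right h1
    have h3 : η ^ residueCard r.1 ∈ S n := by
      have : η ∈ S n := by rw [← SetLike.mem_coe, hS n]; exact hη n
      exact Subalgebra.pow_mem _ this _
    have h4 : shift r.toIK η ∈ S n := by
      have heq : shift r.toIK η
          = (shift r.toIK η - η ^ residueCard r.1) + η ^ residueCard r.1 := by ring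
      rw [heq]
      exact Subalgebra.add_mem _ h2 h3
    rw [← hS n]
    exact h4
  refine ⟨hshift_closed p ξ hξn, ?_, ?_⟩
  · -- (ii) shifts commute
    funext b
    show ξ (q.toIK * (p.toIK * b)) = ξ (p.toIK * (q.toIK * b))
    rw [mul_left_comm]
  · -- (iii) Frobenius congruence
    unfold idealMulSet
    rw [hWitt, Submodule.span_eq]
    -- pick a nonzero d ∈ p and J with span {d} = p * J
    obtain ⟨d, hdp, hd0⟩ := (Submodule.ne_bot_iff p.1).mp p.2.2
    have hle : Ideal.span {d} ≤ p.1 := by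
      rw [Ideal.span_le, Set.singleton_subset_iff]; exact hdp
    obtain ⟨J, hJ⟩ : p.1 ∣ Ideal.span {d} := Ideal.dvd_iff_le.mpr hle
    have hreg : Function.Injective fun m : IK K → A => d • m := by
      intro u v huv
      funext b
      have := congrFun huv b
      exact aux_flat_regular K A hd0 this
    refine aux_smul_iInf_mem p.1 J d hJ hreg T _ fun n => ?_
    have hspan : Submodule.span (𝓞 K) (UnSet K A n) = T n := by
      rw [hT, ← hS n, ← Subalgebra.coe_toSubmodule, Submodule.span_eq]
    have := (hξn (n + 1)).2 p
    unfold idealMulSet at this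
    rwa [hspan] at this

end
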